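/- For every k ≥ 2 and every n ≥ 0, p_k(n) > 2^{√(2n/3 + 1/4) − 3/2}. -/

import Mathlib

/-- The number of `k`-regular partitions of `n`: partitions of `n` with no part divisible
by `k`. -/
def regularPartitions (k n : ℕ) : ℕ :=
  (Finset.univ.filter fun p : n.Partition => ∀ i ∈ p.parts, ¬ k ∣ i).card

/-- Build a partition of `n` from a finset of positive numbers with sum ≤ n, padding with 1s. -/
def mkPart (n : ℕ) (S : Finset ℕ) (h1 : S.sum id ≤ n) (h2 : ∀ x ∈ S, 0 < x) :
    n.Partition where
  parts := S.val + Multiset.replicate (n - S.sum id) 1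
  parts_pos := by
    intro i hi
    rcases Multiset.mem_add.1 hi with h | h
    · exact h2 i h
    · rw [Multiset.eq_of_mem_replicate h]; norm_num
  parts_sum := by
    rw [Multiset.sum_add, Multiset.sum_replicate, smul_eq_mul, mul_one]
    have : S.val.sum = S.sum id := by
      show S.val.sum = (S.val.map id).sum
      rw [Multiset.map_id]
    omega

theorem pow_le_regular (k n t : ℕ) (hk : 2 ≤ k) (ht : t * t + 2 * t ≤ n) :
    2 ^ t ≤ regularPartitions k n := by
  classical
  set f : ℕ → ℕ := fun j => if k ∣ (2 * j + 2) then 2 * j + 3 else 2 * j + 2 with hf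
  have hfl : ∀ j, 2 * j + 2 ≤ f j := by
    intro j; simp only [hf]; split <;> omega
  have hfu : ∀ j, f j ≤ 2 * j + 3 := by
    intro j; simp only [hf]; split <;> omega
  have hfnd : ∀ j, ¬ k ∣ f j := by
    intro j
    simp only [hf]
    split
    next h =>
      intro h2
      have := Nat.dvd_sub h2 h
      have he : 2 * j + 3 - (2 * j + 2) = 1 := by omega
      rw [he, Nat.dvd_one] at this
      omega
    next h => exact h
  have hfinj : Function.Injective f := by
    have : StrictMono f := strictMono_nat_of_lt_succ fun j => by
      have := hfu j; have := hfl (j + 1); omega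
    exact this.injective
  set B : Finset ℕ := (Finset.range t).image f with hB
  have hBcard : B.card = t := by
    rw [hB, Finset.card_image_of_injective _ hfinj, Finset.card_range]
  have hBsum : B.sum id ≤ t * t + 2 * t := by
    rw [hB, Finset.sum_image (fun a _ b _ h => hfinj h)]
    have : ∀ m, (Finset.range m).sum (fun j => id (f j)) ≤ m * m + 2 * m := by
      intro m
      induction m with
      | zero => simp
      | succ m ih =>
        rw [Finset.sum_range_succ]
        have := hfu m
        have he : (m + 1) * (m + 1) = m * m + 2 * m + 1 := by ring
        simp only [id] at *
        omega
    exact this t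
  have hB2 : ∀ b ∈ B, 2 ≤ b := by
    intro b hb
    rw [hB, Finset.mem_image] at hb
    obtain ⟨j, _, rfl⟩ := hb
    have := hfl j; omega
  have hBnd : ∀ b ∈ B, ¬ k ∣ b := by
    intro b hb
    rw [hB, Finset.mem_image] at hb
    obtain ⟨j, _, rfl⟩ := hb
    exact hfnd j
  -- sum/pos facts for subsets
  have hsub : ∀ S ∈ B.powerset, S.sum id ≤ n := by
    intro S hS
    rw [Finset.mem_powerset] at hS
    calc S.sum id ≤ B.sum id := Finset.sum_le_sum_of_subset hS
    _ ≤ n := le_trans hBsum ht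
  have hpos : ∀ S ∈ B.powerset, ∀ x ∈ S, 0 < x := by
    intro S hS x hx
    rw [Finset.mem_powerset] at hS
    have := hB2 x (hS hx); omega
  set Φ : {x // x ∈ B.powerset} → n.Partition :=
    fun x => mkPart n x.1 (hsub x.1 x.2) (hpos x.1 x.2) with hΦ
  have key : B.powerset.attach.card ≤
      (Finset.univ.filter fun p : n.Partition => ∀ i ∈ p.parts, ¬ k ∣ i).card := by
    apply Finset.card_le_card_of_injOn Φ
    · intro x _
      simp only [Finset.mem_coe, Finset.mem_filter, Finset.mem_univ, true_and]
      intro i hi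
      simp only [hΦ, mkPart, Multiset.mem_add] at hi
      rcases hi with h | h
      · exact hBnd i (Finset.mem_powerset.1 x.2 h)
      · rw [Multiset.eq_of_mem_replicate h]
        rw [Nat.dvd_one]; omega
    · intro x _ y _ hxy
      simp only [hΦ, mkPart, Nat.Partition.mk.injEq] at hxy
      have hx2 : ∀ a ∈ (x.1 : Finset ℕ).val, 2 ≤ a :=
        fun a ha => hB2 a (Finset.mem_powerset.1 x.2 ha)
      have hy2 : ∀ a ∈ (y.1 : Finset ℕ).val, 2 ≤ a :=
        fun a ha => hB2 a (Finset.mem_powerset.1 y.2 ha)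
      have hfil : (x.1 : Finset ℕ).val = (y.1 : Finset ℕ).val := by
        have := congrArg (Multiset.filter (2 ≤ ·)) hxy
        rwa [Multiset.filter_add, Multiset.filter_add,
          Multiset.filter_eq_self.2 hx2, Multiset.filter_eq_self.2 hy2,
          Multiset.filter_eq_nil.2 (by intro a ha; rw [Multiset.eq_of_mem_replicate ha]; omega),
          Multiset.filter_eq_nil.2 (by intro a ha; rw [Multiset.eq_of_mem_replicate ha]; omega),
          add_zero, add_zero] at this
      exact Subtype.ext (Finset.val_injective hfil)
  rw [Finset.card_attach, Finset.card_powerset, hBcard] at key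
  exact key

/-- For every `k ≥ 2` and every `n ≥ 0`, `p_k(n) > 2^{√(2n/3 + 1/4) − 3/2}`. -/
theorem regular_lower_bound (k n : ℕ) (hk : 2 ≤ k) :
    (regularPartitions k n : ℝ) >
      (2 : ℝ) ^ (Real.sqrt (2 * n / 3 + 1 / 4) - 3 / 2) := by
  set s := Nat.sqrt (n + 1) with hs
  have hs1 : 1 ≤ s := by
    rw [hs]
    have := Nat.sqrt_pos (n := n + 1)
    omega
  set t := s - 1 with htdef
  have hts : t + 1 = s := by omega
  have hlow : s * s ≤ n + 1 := by
    rw [hs]; have := Nat.sqrt_le' (n + 1); nlinarith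
  have hub : n + 1 ≤ s * s + 2 * s := by
    have h := Nat.lt_succ_sqrt' (n + 1)
    rw [← hs] at h
    nlinarith
  have h1 : t * t + 2 * t ≤ n := by nlinarith
  have h2 := pow_le_regular k n t hk h1
  have htR : (t : ℝ) + 1 = (s : ℝ) := by exact_mod_cast hts
  have hubR : (n : ℝ) + 1 ≤ (s : ℝ) * s + 2 * s := by exact_mod_cast hub
  have hsR : Real.sqrt (2 * n / 3 + 1 / 4) < (s : ℝ) + 1 / 2 := by
    rw [show ((s : ℝ) + 1 / 2) = Real.sqrt (((s : ℝ) + 1 / 2) ^ 2) from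
      (Real.sqrt_sq (by positivity)).symm]
    apply Real.sqrt_lt_sqrt (by positivity)
    have hs1R : (1 : ℝ) ≤ (s : ℝ) := by exact_mod_cast hs1
    nlinarith
  have hlt : Real.sqrt (2 * n / 3 + 1 / 4) - 3 / 2 < (t : ℝ) := by linarith
  calc (2 : ℝ) ^ (Real.sqrt (2 * n / 3 + 1 / 4) - 3 / 2)
      < (2 : ℝ) ^ ((t : ℕ) : ℝ) :=
        (Real.rpow_lt_rpow_left_iff (by norm_num)).2 hlt
    _ = ((2 ^ t : ℕ) : ℝ) := by rw [Real.rpow_natCast]; push_cast; ring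
    _ ≤ (regularPartitions k n : ℝ) := by exact_mod_cast h2
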